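/- Let k ≥ 1 and let G be a k-degenerate simple graph with edge set of size m. Then the edges of G can be ordered as e_1, e_2, …, e_m so that for each i, the edge e_i is a special edge of the subgraph G_i of G induced by the edge set {e_1, …, e_i}; that is, writing e_i = u_i v_i, the vertex u_i is adjacent in G_i to at most k vertices whose degree in G_i is more than k, and the degree of v_i in G_i is at most k. -/

import Mathlib

/-- `G` is `k`-degenerate: every nonempty (induced) subgraph has a vertex of degree at most `k`. -/
def SimpleGraph.Degenerate {V : Type*} (k : ℕ) (G : SimpleGraph V) : Prop :=
  ∀ s : Set V, s.Nonempty → ∃ v ∈ s, (s ∩ {w | G.Adj v w}).ncard ≤ k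

/-- Two edges (as unordered pairs) share an endpoint. -/
def Sym2.ShareEndpoint {V : Type*} (e f : Sym2 V) : Prop := ∃ v, v ∈ e ∧ v ∈ f

/-- Two edges are within distance one: they share an endpoint, or some edge of `G`
shares an endpoint with both. -/
def SimpleGraph.WithinDistOne {V : Type*} (G : SimpleGraph V) (e f : Sym2 V) : Prop :=
  Sym2.ShareEndpoint e f ∨ ∃ g ∈ G.edgeSet, Sym2.ShareEndpoint e g ∧ Sym2.ShareEndpoint g f

/-- `G` admits a strong edge-coloring with `n` colors: distinct edges within distance one
receive different colors. -/
def SimpleGraph.StrongEdgeColorable {V : Type*} (G : SimpleGraph V) (n : ℕ) : Prop :=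
  ∃ c : G.edgeSet → Fin n, ∀ e f : G.edgeSet, e ≠ f → G.WithinDistOne e.1 f.1 → c e ≠ c f

/-- The strong chromatic index of `G`. -/
noncomputable def SimpleGraph.strongChromaticIndex {V : Type*} (G : SimpleGraph V) : ℕ :=
  sInf {n | G.StrongEdgeColorable n}


lemma degenerate_mono {V : Type*} [Fintype V] {k : ℕ} {H G : SimpleGraph V}
    (hle : H ≤ G) (hG : G.Degenerate k) : H.Degenerate k := by
  intro s hs
  obtain ⟨v, hv, hcard⟩ := hG s hs
  refine ⟨v, hv, le_trans (Set.ncard_le_ncard ?_ (Set.toFinite _)) hcard⟩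
  exact Set.inter_subset_inter_right _ (fun w hw => hle hw)

lemma special_edge {V : Type*} [Fintype V] (k : ℕ) (H : SimpleGraph V)
    (hdeg : H.Degenerate k) {f : Sym2 V} (hf : f ∈ H.edgeSet) :
    ∃ u v : V, s(u, v) ∈ H.edgeSet ∧
      ({w | H.Adj u w ∧ k < (H.neighborSet w).ncard}).ncard ≤ k ∧
      (H.neighborSet v).ncard ≤ k := by
  set B : Set V := {w | k < (H.neighborSet w).ncard} with hBdef
  by_cases hB : B.Nonempty
  · obtain ⟨u, huB, hu⟩ := hdeg B hB
    have huB' : k < (H.neighborSet u).ncard := huB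
    have hu' : (H.neighborSet u ∩ B).ncard ≤ k := by
      rw [Set.inter_comm]; exact hu
    have hex : ∃ v ∈ H.neighborSet u, v ∉ B := by
      by_contra hcon
      push_neg at hcon
      have : H.neighborSet u ∩ B = H.neighborSet u := by
        apply Set.inter_eq_left.2
        intro x hx; exact hcon x hx
      rw [this] at hu'
      omega
    obtain ⟨v, hvN, hvB⟩ := hex
    refine ⟨u, v, H.mem_edgeSet.2 hvN, ?_, ?_⟩
    · have : {w | H.Adj u w ∧ k < (H.neighborSet w).ncard} = H.neighborSet u ∩ B := by
        ext w; simp [hBdef, SimpleGraph.neighborSet]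
      rw [this]; exact hu'
    · simpa [hBdef] using hvB
  · induction f with
    | h u v =>
      refine ⟨u, v, hf, ?_, ?_⟩
      · have : {w | H.Adj u w ∧ k < (H.neighborSet w).ncard} = ∅ := by
          ext w
          simp only [Set.mem_setOf_eq, Set.mem_empty_iff_false, iff_false]
          rintro ⟨-, hw⟩
          exact hB ⟨w, hw⟩
        simp [this]
      · by_contra hcon
        exact hB ⟨v, by simpa [hBdef] using lt_of_not_ge hcon⟩

lemma aux_order {V : Type*} [Fintype V] (k : ℕ) :
    ∀ m (H : SimpleGraph V), H.Degenerate k → H.edgeSet.ncard = m →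
    ∃ e : Fin m → Sym2 V, Function.Injective e ∧ (∀ j, e j ∈ H.edgeSet) ∧
      (∀ f ∈ H.edgeSet, ∃ j, e j = f) ∧
      ∀ i : Fin m, ∃ u v : V, e i = s(u, v) ∧
        ({w | (SimpleGraph.fromEdgeSet (e '' {j | j ≤ i})).Adj u w ∧
            k < ((SimpleGraph.fromEdgeSet (e '' {j | j ≤ i})).neighborSet w).ncard}).ncard
          ≤ k ∧
        ((SimpleGraph.fromEdgeSet (e '' {j | j ≤ i})).neighborSet v).ncard ≤ k := by
  intro m
  induction m with
  | zero =>
    intro H _ h0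
    have : H.edgeSet = ∅ := (Set.ncard_eq_zero (Set.toFinite _)).1 h0
    exact ⟨Fin.elim0, fun a => a.elim0, fun a => a.elim0,
      fun f hf => by rw [this] at hf; exact hf.elim, fun a => a.elim0⟩
  | succ m ih =>
    intro H hH hcard
    have hne : H.edgeSet.Nonempty := by
      rw [Set.nonempty_iff_ne_empty]
      intro h
      rw [h, Set.ncard_empty] at hcard
      omega
    obtain ⟨f, hf⟩ := hne
    obtain ⟨u, v, huv, hu, hv⟩ := special_edge k H hH hf
    set H' := H.deleteEdges {s(u, v)} with hH'def
    have hle' : H' ≤ H := SimpleGraph.deleteEdges_le _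
    have hH' : H'.Degenerate k := degenerate_mono hle' hH
    have hE' : H'.edgeSet = H.edgeSet \ {s(u, v)} := SimpleGraph.edgeSet_deleteEdges _
    have hnot : s(u, v) ∉ H'.edgeSet := by rw [hE']; simp
    have hc' : H'.edgeSet.ncard = m := by
      rw [hE', Set.ncard_diff_singleton_of_mem huv, hcard]
      omega
    obtain ⟨e', hinj', hmem', hsurj', hspec'⟩ := ih H' hH' hc'
    set e : Fin (m + 1) → Sym2 V := Fin.snoc e' s(u, v) with hedef
    have hememcast : ∀ j : Fin m, e j.castSucc = e' j := fun j => Fin.snoc_castSucc _ _ _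
    have helast : e (Fin.last m) = s(u, v) := Fin.snoc_last _ _
    have hmem : ∀ j, e j ∈ H.edgeSet := by
      intro j
      induction j using Fin.lastCases with
      | last => rw [helast]; exact huv
      | cast j => rw [hememcast]; exact SimpleGraph.edgeSet_mono hle' (hmem' j)
    have hsurj : ∀ g ∈ H.edgeSet, ∃ j, e j = g := by
      intro g hg
      by_cases hgeq : g = s(u, v)
      · exact ⟨Fin.last m, by rw [helast, hgeq]⟩
      · obtain ⟨j, hj⟩ := hsurj' g (by rw [hE']; exact ⟨hg, hgeq⟩)
        exact ⟨j.castSucc, by rw [hememcast]; exact hj⟩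
    have hinj : Function.Injective e := by
      intro a b hab
      induction a using Fin.lastCases with
      | last =>
        induction b using Fin.lastCases with
        | last => rfl
        | cast b =>
          rw [helast, hememcast] at hab
          exact absurd (hab ▸ hmem' b) hnot
      | cast a =>
        induction b using Fin.lastCases with
        | last =>
          rw [helast, hememcast] at hab
          exact absurd (hab ▸ hmem' a) hnot
        | cast b =>
          rw [hememcast, hememcast] at hab
          rw [hinj' hab]
    refine ⟨e, hinj, hmem, hsurj, ?_⟩
    intro i
    induction i using Fin.lastCases with
    | last =>
      have himg : e '' {j | j ≤ Fin.last m} = H.edgeSet := by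
        have huniv : {j : Fin (m + 1) | j ≤ Fin.last m} = Set.univ :=
          Set.eq_univ_of_forall fun j => Fin.le_last j
        rw [huniv, Set.image_univ]
        ext g
        constructor
        · rintro ⟨j, rfl⟩; exact hmem j
        · intro hg; exact hsurj g hg
      have hgr : SimpleGraph.fromEdgeSet (e '' {j | j ≤ Fin.last m}) = H := by
        rw [himg, SimpleGraph.fromEdgeSet_edgeSet]
      exact ⟨u, v, helast, by rw [hgr]; exact hu, by rw [hgr]; exact hv⟩
    | cast i =>
      obtain ⟨u', v', heq, hu', hv'⟩ := hspec' i
      have himg : e '' {j | j ≤ i.castSucc} = e' '' {j | j ≤ i} := by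
        ext g
        constructor
        · rintro ⟨j, hj, rfl⟩
          have hjlt : j < Fin.last m := lt_of_le_of_lt hj (Fin.castSucc_lt_last i)
          obtain ⟨j', rfl⟩ := Fin.exists_castSucc_eq.2 (ne_of_lt hjlt)
          exact ⟨j', Fin.castSucc_le_castSucc_iff.1 hj, (hememcast j').symm ▸ rfl⟩
        · rintro ⟨j, hj, rfl⟩
          exact ⟨j.castSucc, Fin.castSucc_le_castSucc_iff.2 hj, hememcast j⟩
      rw [himg]
      exact ⟨u', v', by rw [hememcast]; exact heq, hu', hv'⟩

/-- The edges of a `k`-degenerate graph (`k ≥ 1`) can be ordered `e 0, …, e (m-1)` so that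
each `e i = uv` is a special edge of the subgraph `G i` induced by the edge set
`{e j | j ≤ i}`: `u` is adjacent in `G i` to at most `k` vertices whose degree in `G i`
exceeds `k`, and `v` has degree at most `k` in `G i`. -/
theorem exists_special_edge_order {V : Type*} [Fintype V] [DecidableEq V]
    (k : ℕ) (hk : 1 ≤ k) (G : SimpleGraph V) [DecidableRel G.Adj]
    (hdeg : G.Degenerate k) (m : ℕ) (hm : G.edgeFinset.card = m) :
    ∃ e : Fin m → Sym2 V, Function.Injective e ∧ (∀ j, e j ∈ G.edgeSet) ∧
      (∀ f ∈ G.edgeSet, ∃ j, e j = f) ∧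
      ∀ i : Fin m, ∃ u v : V, e i = s(u, v) ∧
        ({w | (SimpleGraph.fromEdgeSet (e '' {j | j ≤ i})).Adj u w ∧
            k < ((SimpleGraph.fromEdgeSet (e '' {j | j ≤ i})).neighborSet w).ncard}).ncard
          ≤ k ∧
        ((SimpleGraph.fromEdgeSet (e '' {j | j ≤ i})).neighborSet v).ncard ≤ k := by
  have hm' : G.edgeSet.ncard = m := by
    rw [Set.ncard_eq_toFinset_card']
    simpa [SimpleGraph.edgeFinset] using hm
  exact aux_order k m G hdeg hm'
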